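/- Under the RLVR task-selection setup, for any CoT step s ∈ [S], iteration t ≥ 0, task index j ∈ [J], and any fixed string x_{s−1} consisting of a prompt followed by s−1 CoT tokens: if ρ^{(t)}_{s,j} > 0, then the expectation over the training batch at iteration t of the logit update at the token σ_j(x_{s−1}) satisfies E[(f_{θ^{(t+1)}}(x_{s−1}) − f_{θ^{(t)}}(x_{s−1}))[σ_j(x_{s−1})]] = η·γ²·P_t(A_{s,j} | V=1)·(1 − P_t(A_{s,j}))·(1 − 1/ρ^{(t)}_{s,j}); and if ρ^{(t)}_{s,j} = 0, then this expectation equals −η·γ²·P_t(A_{s,j}). -/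

import Mathlib

open scoped BigOperators RealInnerProductSpace ENNReal

noncomputable section

namespace RLVR

/-- Softmax distribution over a finite vocabulary. -/
def softmax {V : Type*} [Fintype V] (L : V → ℝ) (y : V) : ℝ :=
  Real.exp (L y) / ∑ w, Real.exp (L w)

variable {V : Type*} [Fintype V] [DecidableEq V] [Nonempty V]
variable {P : Type*} [Fintype P]
variable {J S Bsz : ℕ}

/-- The model logits: `f_θ(x)[v] = Σ_j γ·1[σ_j(x) = v]·⟨h_{s,j}, θ⟩`, where the
positional index `s` records the number of already generated CoT tokens in `x`. -/
def model (γ : ℝ) (σ : Fin J → List V → V)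
    (h : Fin S → Fin J → EuclideanSpace ℝ P)
    (θ : EuclideanSpace ℝ P) (s : Fin S) (x : List V) : V → ℝ :=
  fun v => ∑ j : Fin J, (if σ j x = v then γ else 0) * ⟪h s j, θ⟫

/-- The autoregressive policy `π_θ(y | x) = Softmax(f_θ(x))[y]`. -/
def policy (γ : ℝ) (σ : Fin J → List V → V)
    (h : Fin S → Fin J → EuclideanSpace ℝ P)
    (θ : EuclideanSpace ℝ P) (s : Fin S) (x : List V) (y : V) : ℝ :=
  softmax (model γ σ h θ s x) y

/-- A trajectory: a prompt together with the `S` generated CoT tokens. -/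
abbrev Traj (V : Type*) (S : ℕ) := List V × (Fin S → V)

/-- The prefix `x_n`: the prompt followed by the first `n` generated tokens. -/
def pref (ω : Traj V S) (n : ℕ) : List V := ω.1 ++ (List.ofFn ω.2).take n

/-- The full generated string `x_S`. -/
def fullStr (ω : Traj V S) : List V := ω.1 ++ List.ofFn ω.2

/-- Density of a trajectory under prompt distribution `D` and parameters `θ`. -/
def dens (D : List V → ℝ) (γ : ℝ) (σ : Fin J → List V → V)
    (h : Fin S → Fin J → EuclideanSpace ℝ P) (θ : EuclideanSpace ℝ P)
    (ω : Traj V S) : ℝ :=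
  D ω.1 * ∏ s : Fin S, policy γ σ h θ s (pref ω s.val) (ω.2 s)

/-- Probability `P_θ(E)` of an event `E` over trajectories. -/
def Pr (D : List V → ℝ) (γ : ℝ) (σ : Fin J → List V → V)
    (h : Fin S → Fin J → EuclideanSpace ℝ P) (θ : EuclideanSpace ℝ P)
    (E : Set (Traj V S)) : ℝ :=
  ∑' ω : Traj V S, Set.indicator E (dens D γ σ h θ) ω

/-- Conditional probability `P_θ(E | F)`. -/
def condPr (D : List V → ℝ) (γ : ℝ) (σ : Fin J → List V → V)
    (h : Fin S → Fin J → EuclideanSpace ℝ P) (θ : EuclideanSpace ℝ P)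
    (E F : Set (Traj V S)) : ℝ :=
  Pr D γ σ h θ (E ∩ F) / Pr D γ σ h θ F

/-- The event `A_{s,j}` that task `σ_j` is selected at step `s`. -/
def Av (σ : Fin J → List V → V) (s : Fin S) (j : Fin J) : Set (Traj V S) :=
  {ω | ω.2 s = σ j (pref ω s.val)}

/-- The event that the verifier accepts the final string. -/
def VE (Verif : List V → Bool) : Set (Traj V S) :=
  {ω | Verif (fullStr ω) = true}

/-- The task-advantage ratio `ρ^θ_{s,j} = P_θ(V=1 | A_{s,j}) / P_θ(V=1 | A_{s,j}ᶜ)`,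
valued in `ℝ≥0∞` (so that a vanishing denominator yields `∞`, matching the paper's
conventions). -/
def ratio (D : List V → ℝ) (γ : ℝ) (σ : Fin J → List V → V)
    (h : Fin S → Fin J → EuclideanSpace ℝ P) (Verif : List V → Bool)
    (θ : EuclideanSpace ℝ P) (s : Fin S) (j : Fin J) : ℝ≥0∞ :=
  ENNReal.ofReal (condPr D γ σ h θ (VE Verif) (Av σ s j)) /
    ENNReal.ofReal (condPr D γ σ h θ (VE Verif) ((Av σ s j)ᶜ))

/-- The REINFORCE parameter update
`θ' = θ + (η/B)·Σ_b Σ_s ∇_θ log π_θ(y_s^{(b)} | x_{s−1}^{(b)})` on a batch `bs`. -/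
def update (γ : ℝ) (σ : Fin J → List V → V)
    (h : Fin S → Fin J → EuclideanSpace ℝ P) (η : ℝ)
    (θ : EuclideanSpace ℝ P) (bs : Fin Bsz → Traj V S) : EuclideanSpace ℝ P :=
  θ + (η / (Bsz : ℝ)) • ∑ b : Fin Bsz, ∑ s : Fin S,
    gradient (fun θ' => Real.log (policy γ σ h θ' s (pref (bs b) s.val) ((bs b).2 s))) θ

/-- Density of a single trajectory of the training batch: a draw from `P_θ`
conditioned on the verifier accepting. -/
def condDens (D : List V → ℝ) (γ : ℝ) (σ : Fin J → List V → V)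
    (h : Fin S → Fin J → EuclideanSpace ℝ P) (Verif : List V → Bool)
    (θ : EuclideanSpace ℝ P) (ω : Traj V S) : ℝ :=
  Set.indicator (VE Verif) (dens D γ σ h θ) ω / Pr D γ σ h θ (VE Verif)

/-- Expectation, over an i.i.d. batch of `Bsz` positive samples
(drawn from `P_θ(· | V = 1)`), of a function of the batch. -/
def Ebatch (D : List V → ℝ) (γ : ℝ) (σ : Fin J → List V → V)
    (h : Fin S → Fin J → EuclideanSpace ℝ P) (Verif : List V → Bool)
    (θ : EuclideanSpace ℝ P) (F : (Fin Bsz → Traj V S) → ℝ) : ℝ :=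
  ∑' bs : Fin Bsz → Traj V S, (∏ b : Fin Bsz, condDens D γ σ h Verif θ (bs b)) * F bs

/-- The empirical discrepancy
`Q_{s,j} = (1/B)·Σ_b (1[y_s^{(b)} = σ_j(x_{s−1}^{(b)})] − π_θ(σ_j(x_{s−1}^{(b)}) | x_{s−1}^{(b)}))`. -/
def Q (γ : ℝ) (σ : Fin J → List V → V)
    (h : Fin S → Fin J → EuclideanSpace ℝ P) (θ : EuclideanSpace ℝ P)
    (bs : Fin Bsz → Traj V S) (s : Fin S) (j : Fin J) : ℝ :=
  (1 / (Bsz : ℝ)) * ∑ b : Fin Bsz,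
    ((if (bs b).2 s = σ j (pref (bs b) s.val) then (1 : ℝ) else 0)
      - policy γ σ h θ s (pref (bs b) s.val) (σ j (pref (bs b) s.val)))

/-- The first `n` steps of the ground-truth chain of thought started at prompt `x0`:
apply `σ_{τ(1)}, …, σ_{τ(n)}` autoregressively. -/
def fstarPref (σ : Fin J → List V → V) (τ : Fin S → Fin J) (x0 : List V)
    (n : ℕ) : List V :=
  ((List.finRange S).take n).foldl (fun acc s => acc ++ [σ (τ s) acc]) x0

/-- The target function `f*`: the full ground-truth chain of thought. -/
def fstar (σ : Fin J → List V → V) (τ : Fin S → Fin J) (x0 : List V) : List V :=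
  fstarPref σ τ x0 S

/-- `P_θ(f*(x0) | x0)`: the probability of generating exactly the ground-truth
completion from prompt `x0` (chain rule of probability). -/
def targetProb (γ : ℝ) (σ : Fin J → List V → V)
    (h : Fin S → Fin J → EuclideanSpace ℝ P) (τ : Fin S → Fin J)
    (θ : EuclideanSpace ℝ P) (x0 : List V) : ℝ :=
  ∏ s : Fin S, policy γ σ h θ s (fstarPref σ τ x0 s.val) (σ (τ s) (fstarPref σ τ x0 s.val))

/-- The cross-entropy loss `L(θ) = E_{x0∼D}[log(1/P_θ(f*(x0) | x0))]`. -/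
def celoss (D : List V → ℝ) (γ : ℝ) (σ : Fin J → List V → V)
    (h : Fin S → Fin J → EuclideanSpace ℝ P) (τ : Fin S → Fin J)
    (θ : EuclideanSpace ℝ P) : ℝ :=
  ∑' x0 : List V, D x0 * Real.log (1 / targetProb γ σ h τ θ x0)

/-- The training iterates: `θ^{(0)} = θ0` and
`θ^{(t+1)} = update(θ^{(t)}, batch t)`. -/
def thetaSeq (γ : ℝ) (σ : Fin J → List V → V)
    (h : Fin S → Fin J → EuclideanSpace ℝ P) (η : ℝ) (θ0 : EuclideanSpace ℝ P)
    (ω : ℕ → Fin Bsz → Traj V S) : ℕ → EuclideanSpace ℝ P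
  | 0 => θ0
  | t + 1 => update γ σ h η (thetaSeq γ σ h η θ0 ω t) (ω t)

/-- Extension of a finite-horizon family of batches to all times. -/
def extendBatches (T : ℕ) (ωf : Fin T → Fin Bsz → Traj V S) :
    ℕ → Fin Bsz → Traj V S :=
  fun t => if ht : t < T then ωf ⟨t, ht⟩ else fun _ => ([], fun _ => Classical.arbitrary V)

/-- Density of the whole training run over horizon `T`: at each iteration `t` the
batch is drawn i.i.d. from `P_{θ^{(t)}}(· | V = 1)`. -/
def trainDens (D : List V → ℝ) (γ : ℝ) (σ : Fin J → List V → V)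
    (h : Fin S → Fin J → EuclideanSpace ℝ P) (Verif : List V → Bool) (η : ℝ)
    (θ0 : EuclideanSpace ℝ P) (T : ℕ) (ωf : Fin T → Fin Bsz → Traj V S) : ℝ :=
  ∏ t : Fin T, ∏ b : Fin Bsz,
    condDens D γ σ h Verif (thetaSeq γ σ h η θ0 (extendBatches T ωf) t.val) (ωf t b)

/-- Probability, over the training randomness up to horizon `T`, of an event on the
batches. -/
def PrTrain (D : List V → ℝ) (γ : ℝ) (σ : Fin J → List V → V)
    (h : Fin S → Fin J → EuclideanSpace ℝ P) (Verif : List V → Bool) (η : ℝ)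
    (θ0 : EuclideanSpace ℝ P) (T : ℕ)
    (E : Set (Fin T → Fin Bsz → Traj V S)) : ℝ :=
  ∑' ωf : Fin T → Fin Bsz → Traj V S,
    Set.indicator E (trainDens D γ σ h Verif η θ0 T) ωf

set_option linter.unusedSectionVars false
set_option linter.unusedVariables false
section Helpers

open RLVR

variable {V : Type*} [Fintype V] [DecidableEq V] [Nonempty V]
variable {P : Type*} [Fintype P]
variable {J S Bsz : ℕ}

lemma sum_exp_pos (L : V → ℝ) : 0 < ∑ w, Real.exp (L w) :=
  Finset.sum_pos (fun w _ => Real.exp_pos _) Finset.univ_nonempty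

lemma softmax_nonneg (L : V → ℝ) (y : V) : 0 ≤ softmax L y :=
  div_nonneg (Real.exp_nonneg _) (sum_exp_pos L).le

lemma softmax_le_one (L : V → ℝ) (y : V) : softmax L y ≤ 1 := by
  rw [softmax, div_le_one (sum_exp_pos L)]
  exact Finset.single_le_sum (fun w _ => Real.exp_nonneg _) (Finset.mem_univ y)

lemma softmax_sum (L : V → ℝ) : ∑ y, softmax L y = 1 := by
  simp only [softmax]
  rw [← Finset.sum_div, div_self (sum_exp_pos L).ne']

lemma policy_nonneg (γ : ℝ) (σ : Fin J → List V → V)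
    (h : Fin S → Fin J → EuclideanSpace ℝ P) (θ : EuclideanSpace ℝ P)
    (s : Fin S) (x : List V) (y : V) : 0 ≤ policy γ σ h θ s x y :=
  softmax_nonneg _ _

lemma policy_le_one (γ : ℝ) (σ : Fin J → List V → V)
    (h : Fin S → Fin J → EuclideanSpace ℝ P) (θ : EuclideanSpace ℝ P)
    (s : Fin S) (x : List V) (y : V) : policy γ σ h θ s x y ≤ 1 :=
  softmax_le_one _ _

lemma policy_sum (γ : ℝ) (σ : Fin J → List V → V)
    (h : Fin S → Fin J → EuclideanSpace ℝ P) (θ : EuclideanSpace ℝ P)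
    (s : Fin S) (x : List V) : ∑ y, policy γ σ h θ s x y = 1 :=
  softmax_sum _

end Helpers
section PartB

open RLVR

variable {V : Type*} [Fintype V] [DecidableEq V] [Nonempty V]
variable {P : Type*} [Fintype P]
variable {J S Bsz : ℕ}
variable {γ : ℝ} {σ : Fin J → List V → V} {h : Fin S → Fin J → EuclideanSpace ℝ P}

/-- value of the logit at the token chosen by task `j`. -/
lemma model_apply_sigma (hσ : ∀ j j' : Fin J, j ≠ j' → ∀ x : List V, σ j x ≠ σ j' x)
    (θ : EuclideanSpace ℝ P) (s : Fin S) (x : List V) (j : Fin J) :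
    model γ σ h θ s x (σ j x) = γ * ⟪h s j, θ⟫ := by
  rw [model, Finset.sum_eq_single j]
  · rw [if_pos rfl]
  · intro j' _ hj'
    rw [if_neg (hσ j' j hj' x), zero_mul]
  · exact fun hj => absurd (Finset.mem_univ j) hj

/-- The normalizing constant of the softmax does not depend on the string. -/
lemma sum_exp_model (hσ : ∀ j j' : Fin J, j ≠ j' → ∀ x : List V, σ j x ≠ σ j' x)
    (θ : EuclideanSpace ℝ P) (s : Fin S) (x : List V) :
    ∑ w, Real.exp (model γ σ h θ s x w)
      = ∑ j', Real.exp (γ * ⟪h s j', θ⟫) + ((Fintype.card V - J : ℕ) : ℝ) := by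
  classical
  have hinj : Function.Injective (fun j : Fin J => σ j x) := by
    intro a b hab
    by_contra hne
    exact hσ a b hne x hab
  have hsplit := Finset.sum_sdiff (f := fun w => Real.exp (model γ σ h θ s x w))
    (Finset.image (fun j : Fin J => σ j x) Finset.univ).subset_univ
  have h1 : ∑ w ∈ Finset.image (fun j : Fin J => σ j x) Finset.univ,
      Real.exp (model γ σ h θ s x w) = ∑ j', Real.exp (γ * ⟪h s j', θ⟫) := by
    rw [Finset.sum_image (fun a _ b _ hab => hinj hab)]
    exact Finset.sum_congr rfl fun j' _ => by rw [model_apply_sigma hσ]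
  have h2 : ∑ w ∈ Finset.univ \ Finset.image (fun j : Fin J => σ j x) Finset.univ,
      Real.exp (model γ σ h θ s x w) = ((Fintype.card V - J : ℕ) : ℝ) := by
    have hz : ∀ w ∈ Finset.univ \ Finset.image (fun j : Fin J => σ j x) Finset.univ,
        Real.exp (model γ σ h θ s x w) = 1 := by
      intro w hw
      rw [Finset.mem_sdiff, Finset.mem_image] at hw
      have : model γ σ h θ s x w = 0 := by
        rw [model]
        refine Finset.sum_eq_zero fun j' _ => ?_
        rw [if_neg, zero_mul]
        intro hc
        exact hw.2 ⟨j', Finset.mem_univ _, hc⟩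
      rw [this, Real.exp_zero]
    rw [Finset.sum_congr rfl hz, Finset.sum_const, nsmul_eq_mul, mul_one]
    congr 1
    rw [Finset.card_sdiff_of_subset (Finset.image _ _).subset_univ, Finset.card_univ,
      Finset.card_image_of_injective _ hinj, Finset.card_univ, Fintype.card_fin]
  rw [← hsplit, h2, h1, add_comm]

/-- The common value of `π_θ(σ_j(x) | x)`, independent of `x`. -/
def kappa (γ : ℝ) (σ : Fin J → List V → V) (h : Fin S → Fin J → EuclideanSpace ℝ P)
    (θ : EuclideanSpace ℝ P) (s : Fin S) (j : Fin J) : ℝ :=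
  Real.exp (γ * ⟪h s j, θ⟫)
    / (∑ j', Real.exp (γ * ⟪h s j', θ⟫) + ((Fintype.card V - J : ℕ) : ℝ))

lemma policy_sigma (hσ : ∀ j j' : Fin J, j ≠ j' → ∀ x : List V, σ j x ≠ σ j' x)
    (θ : EuclideanSpace ℝ P) (s : Fin S) (x : List V) (j : Fin J) :
    policy γ σ h θ s x (σ j x) = kappa γ σ h θ s j := by
  rw [policy, softmax, model_apply_sigma hσ, sum_exp_model hσ, kappa]

lemma kappa_pos (hJ : 0 < J) (hσ : ∀ j j' : Fin J, j ≠ j' → ∀ x : List V, σ j x ≠ σ j' x)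
    (θ : EuclideanSpace ℝ P) (s : Fin S) (j : Fin J) :
    0 < kappa γ σ h θ s j := by
  have := policy_sigma (γ := γ) (h := h) hσ θ s [] j
  rw [policy, softmax] at this
  rw [← this]
  exact div_pos (Real.exp_pos _) (sum_exp_pos _)

end PartB
section PartC

open RLVR

variable {V : Type*} [Fintype V] [DecidableEq V] [Nonempty V]
variable {P : Type*} [Fintype P]
variable {J S Bsz : ℕ}
variable {γ : ℝ} {σ : Fin J → List V → V} {h : Fin S → Fin J → EuclideanSpace ℝ P}

/-- The vector of coefficients of the (linear) logit map. -/
def uvec (γ : ℝ) (σ : Fin J → List V → V) (h : Fin S → Fin J → EuclideanSpace ℝ P)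
    (s : Fin S) (x : List V) (w : V) : EuclideanSpace ℝ P :=
  ∑ j', (if σ j' x = w then γ else 0) • h s j'

lemma model_eq_inner (θ : EuclideanSpace ℝ P) (s : Fin S) (x : List V) (w : V) :
    model γ σ h θ s x w = ⟪uvec γ σ h s x w, θ⟫ := by
  rw [model, uvec, sum_inner]
  exact Finset.sum_congr rfl fun j' _ => (real_inner_smul_left _ _ _).symm

lemma hasGradientAt_logPolicy (θ : EuclideanSpace ℝ P) (s : Fin S) (x : List V) (y : V) :
    HasGradientAt (fun θ' => Real.log (policy γ σ h θ' s x y))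
      (uvec γ σ h s x y - (∑ w, Real.exp (model γ σ h θ s x w))⁻¹ •
         ∑ w, Real.exp (model γ σ h θ s x w) • uvec γ σ h s x w) θ := by
  have hfun : (fun θ' => Real.log (policy γ σ h θ' s x y))
      = fun θ' => ⟪uvec γ σ h s x y, θ'⟫
          - Real.log (∑ w, Real.exp (⟪uvec γ σ h s x w, θ'⟫)) := by
    funext θ'
    rw [policy, softmax, Real.log_div (Real.exp_ne_zero _) (sum_exp_pos _).ne',
      Real.log_exp, model_eq_inner]
    congr 2
    exact Finset.sum_congr rfl fun w _ => by rw [model_eq_inner]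
  rw [hfun, hasGradientAt_iff_hasFDerivAt]
  have hlin : ∀ w : V, HasFDerivAt (fun θ' : EuclideanSpace ℝ P => ⟪uvec γ σ h s x w, θ'⟫)
      (innerSL ℝ (uvec γ σ h s x w)) θ := fun w => (innerSL ℝ (uvec γ σ h s x w)).hasFDerivAt
  have hexp : ∀ w : V, HasFDerivAt (fun θ' : EuclideanSpace ℝ P => Real.exp ⟪uvec γ σ h s x w, θ'⟫)
      (Real.exp ⟪uvec γ σ h s x w, θ⟫ • innerSL ℝ (uvec γ σ h s x w)) θ :=
    fun w => (Real.hasDerivAt_exp _).comp_hasFDerivAt θ (hlin w)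
  have hsum : HasFDerivAt (fun θ' : EuclideanSpace ℝ P => ∑ w, Real.exp ⟪uvec γ σ h s x w, θ'⟫)
      (∑ w, Real.exp ⟪uvec γ σ h s x w, θ⟫ • innerSL ℝ (uvec γ σ h s x w)) θ :=
    HasFDerivAt.fun_sum fun w _ => hexp w
  have hZpos : 0 < ∑ w, Real.exp ⟪uvec γ σ h s x w, θ⟫ :=
    Finset.sum_pos (fun w _ => Real.exp_pos _) Finset.univ_nonempty
  have hlog : HasFDerivAt
      (fun θ' : EuclideanSpace ℝ P => Real.log (∑ w, Real.exp ⟪uvec γ σ h s x w, θ'⟫))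
      ((∑ w, Real.exp ⟪uvec γ σ h s x w, θ⟫)⁻¹ •
        ∑ w, Real.exp ⟪uvec γ σ h s x w, θ⟫ • innerSL ℝ (uvec γ σ h s x w)) θ := by
    have := (Real.hasDerivAt_log hZpos.ne').comp_hasFDerivAt θ hsum
    simpa [smul_smul, Function.comp_def] using this
  have htotal := (hlin y).sub hlog
  have hEq : (InnerProductSpace.toDual ℝ (EuclideanSpace ℝ P))
      (uvec γ σ h s x y - (∑ w, Real.exp (model γ σ h θ s x w))⁻¹ •
         ∑ w, Real.exp (model γ σ h θ s x w) • uvec γ σ h s x w)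
      = innerSL ℝ (uvec γ σ h s x y) -
        (∑ w, Real.exp ⟪uvec γ σ h s x w, θ⟫)⁻¹ •
          ∑ w, Real.exp ⟪uvec γ σ h s x w, θ⟫ • innerSL ℝ (uvec γ σ h s x w) := by
    simp only [model_eq_inner]
    apply ContinuousLinearMap.ext
    intro v
    simp only [InnerProductSpace.toDual_apply_apply, ContinuousLinearMap.sub_apply,
      ContinuousLinearMap.smul_apply, ContinuousLinearMap.sum_apply, innerSL_apply_apply,
      inner_sub_left, real_inner_smul_left, sum_inner, smul_eq_mul]
  rw [hEq]
  exact htotal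

lemma gradient_logPolicy (θ : EuclideanSpace ℝ P) (s : Fin S) (x : List V) (y : V) :
    gradient (fun θ' => Real.log (policy γ σ h θ' s x y)) θ
      = uvec γ σ h s x y - (∑ w, Real.exp (model γ σ h θ s x w))⁻¹ •
         ∑ w, Real.exp (model γ σ h θ s x w) • uvec γ σ h s x w :=
  (hasGradientAt_logPolicy θ s x y).gradient

end PartC
section PartD

open RLVR

variable {V : Type*} [Fintype V] [DecidableEq V] [Nonempty V]
variable {P : Type*} [Fintype P]
variable {J S Bsz : ℕ}
variable {γ : ℝ} {σ : Fin J → List V → V} {h : Fin S → Fin J → EuclideanSpace ℝ P}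

lemma inner_h_uvec (hh : Orthonormal ℝ fun sj : Fin S × Fin J => h sj.1 sj.2)
    (s s' : Fin S) (j : Fin J) (x : List V) (w : V) :
    ⟪h s j, uvec γ σ h s' x w⟫ = if s = s' ∧ σ j x = w then γ else 0 := by
  rw [uvec, inner_sum]
  have horth : ∀ j' : Fin J, ⟪h s j, h s' j'⟫
      = if (⟨s, j⟩ : Fin S × Fin J) = ⟨s', j'⟩ then (1 : ℝ) else 0 :=
    fun j' => orthonormal_iff_ite.mp hh (⟨s, j⟩ : Fin S × Fin J) ⟨s', j'⟩
  simp_rw [real_inner_smul_right, horth, Prod.mk.injEq, mul_ite, mul_one, mul_zero]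
  by_cases hs : s = s'
  · subst hs
    rw [Finset.sum_eq_single j]
    · by_cases hw : σ j x = w <;> simp [hw]
    · intro j' _ hj'; simp [hj'.symm]
    · intro hj; exact absurd (Finset.mem_univ j) hj
  · simp [hs]

lemma inner_h_grad (hh : Orthonormal ℝ fun sj : Fin S × Fin J => h sj.1 sj.2)
    (θ : EuclideanSpace ℝ P) (s s' : Fin S) (j : Fin J) (x : List V) (y : V) :
    ⟪h s j, gradient (fun θ' => Real.log (policy γ σ h θ' s' x y)) θ⟫
      = if s = s'
          then (if σ j x = y then γ else 0) - γ * policy γ σ h θ s' x (σ j x)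
          else 0 := by
  rw [gradient_logPolicy, inner_sub_right, real_inner_smul_right, inner_sum]
  simp_rw [real_inner_smul_right, inner_h_uvec hh]
  by_cases hs : s = s'
  · simp only [hs, if_pos rfl, true_and]
    congr 1
    have hsum : ∑ w, Real.exp (model γ σ h θ s' x w) * (if σ j x = w then γ else 0)
        = Real.exp (model γ σ h θ s' x (σ j x)) * γ := by
      rw [Finset.sum_eq_single (σ j x)]
      · rw [if_pos rfl]
      · intro w _ hw; rw [if_neg (Ne.symm (Ne.symm hw)).symm, mul_zero]
      · intro hw; exact absurd (Finset.mem_univ _) hw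
    rw [hsum, policy, softmax]
    field_simp
  · simp [hs]

end PartD
section PartE

open RLVR

variable {V : Type*} [Fintype V] [DecidableEq V] [Nonempty V]
variable {P : Type*} [Fintype P]
variable {J S Bsz : ℕ}
variable {γ : ℝ} {σ : Fin J → List V → V} {h : Fin S → Fin J → EuclideanSpace ℝ P}

lemma uvec_sigma (hσ : ∀ j j' : Fin J, j ≠ j' → ∀ x : List V, σ j x ≠ σ j' x)
    (s : Fin S) (x : List V) (j : Fin J) :
    uvec γ σ h s x (σ j x) = γ • h s j := by
  rw [uvec, Finset.sum_eq_single j]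
  · rw [if_pos rfl]
  · intro j' _ hj'; rw [if_neg (hσ j' j hj' x), zero_smul]
  · intro hj; exact absurd (Finset.mem_univ j) hj

lemma modelDiff (hσ : ∀ j j' : Fin J, j ≠ j' → ∀ x : List V, σ j x ≠ σ j' x)
    (hh : Orthonormal ℝ fun sj : Fin S × Fin J => h sj.1 sj.2)
    (η : ℝ) (θt : EuclideanSpace ℝ P) (s : Fin S) (j : Fin J) (xprev : List V)
    (bs : Fin Bsz → Traj V S) :
    model γ σ h (update γ σ h η θt bs) s xprev (σ j xprev)
      - model γ σ h θt s xprev (σ j xprev)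
      = η * γ ^ 2 * Q γ σ h θt bs s j := by
  rw [model_eq_inner, model_eq_inner, ← inner_sub_right, uvec_sigma hσ, update,
    add_sub_cancel_left, real_inner_smul_left, real_inner_smul_right, inner_sum]
  have hin : ∀ b : Fin Bsz,
      ⟪h s j, ∑ s' : Fin S, gradient
          (fun θ' => Real.log (policy γ σ h θ' s' (pref (bs b) s'.val) ((bs b).2 s'))) θt⟫
        = γ * ((if (bs b).2 s = σ j (pref (bs b) s.val) then (1 : ℝ) else 0)
            - policy γ σ h θt s (pref (bs b) s.val) (σ j (pref (bs b) s.val))) := by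
    intro b
    rw [inner_sum]
    simp_rw [inner_h_grad hh]
    rw [Finset.sum_ite_eq Finset.univ s, if_pos (Finset.mem_univ s)]
    by_cases hy : (bs b).2 s = σ j (pref (bs b) s.val)
    · rw [if_pos hy, if_pos hy.symm]; ring
    · rw [if_neg hy, if_neg (fun hc => hy hc.symm)]; ring
  rw [Q]
  rw [Finset.sum_congr rfl fun b _ => hin b, ← Finset.mul_sum]
  ring

end PartE
section PartF

open RLVR

variable {V : Type*} [Fintype V] [DecidableEq V] [Nonempty V]

lemma chain_sum (n : ℕ) (p : ℕ → List V → V → ℝ)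
    (hp : ∀ m x, ∑ v, p m x v = 1) (x0 : List V) :
    ∑ y : Fin n → V, ∏ s : Fin n, p s.val (x0 ++ (List.ofFn y).take s.val) (y s) = 1 := by
  induction n generalizing p x0 with
  | zero =>
      rw [Fintype.sum_eq_single (fun i => i.elim0)]
      · simp
      · intro y hy
        exact absurd (funext fun i => i.elim0) hy
  | succ n ih =>
      rw [← (Fin.consEquiv (fun _ : Fin (n + 1) => V)).sum_comp, Fintype.sum_prod_type]
      have hterm : ∀ (a : V) (z : Fin n → V),
          (∏ s : Fin (n + 1), p s.val
            (x0 ++ (List.ofFn (Fin.cons a z : Fin (n+1) → V)).take s.val)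
            ((Fin.cons a z : Fin (n+1) → V) s))
          = p 0 x0 a * ∏ s : Fin n, p (s.val + 1)
              ((x0 ++ [a]) ++ (List.ofFn z).take s.val) (z s) := by
        intro a z
        rw [Fin.prod_univ_succ]
        congr 1
        · simp
        · refine Finset.prod_congr rfl fun i _ => ?_
          rw [List.ofFn_succ]
          simp only [Fin.cons_zero, Fin.cons_succ, Fin.val_succ, List.take_succ_cons]
          rw [List.append_cons]
      calc ∑ a : V, ∑ z : Fin n → V, ∏ s : Fin (n + 1), p s.val
              (x0 ++ (List.ofFn ((Fin.consEquiv fun _ => V) (a, z))).take s.val)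
              (((Fin.consEquiv fun _ => V) (a, z)) s)
          = ∑ a : V, p 0 x0 a * ∑ z : Fin n → V, ∏ s : Fin n, p (s.val + 1)
              ((x0 ++ [a]) ++ (List.ofFn z).take s.val) (z s) := by
            refine Finset.sum_congr rfl fun a _ => ?_
            rw [Finset.mul_sum]
            exact Finset.sum_congr rfl fun z _ => hterm a z
        _ = 1 := by
            have := fun a : V => ih (fun m x v => p (m + 1) x v) (fun m x => hp (m+1) x) (x0 ++ [a])
            simp only [this, mul_one, hp 0 x0]

lemma chain_sum_weighted (n : ℕ) (p : ℕ → List V → V → ℝ)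
    (hp : ∀ m x, ∑ v, p m x v = 1) (φ : List V → V → ℝ) (c : ℝ) (m : ℕ) (hm : m < n)
    (hφ : ∀ x, ∑ v, p m x v * φ x v = c) (x0 : List V) :
    ∑ y : Fin n → V,
        (∏ s : Fin n, p s.val (x0 ++ (List.ofFn y).take s.val) (y s))
          * φ (x0 ++ (List.ofFn y).take m) (y ⟨m, hm⟩) = c := by
  induction n generalizing p m x0 with
  | zero => exact absurd hm (Nat.not_lt_zero m)
  | succ n ih =>
      rw [← (Fin.consEquiv (fun _ : Fin (n + 1) => V)).sum_comp, Fintype.sum_prod_type]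
      have hterm : ∀ (a : V) (z : Fin n → V),
          (∏ s : Fin (n + 1), p s.val
            (x0 ++ (List.ofFn (Fin.cons a z : Fin (n+1) → V)).take s.val)
            ((Fin.cons a z : Fin (n+1) → V) s))
          = p 0 x0 a * ∏ s : Fin n, p (s.val + 1)
              ((x0 ++ [a]) ++ (List.ofFn z).take s.val) (z s) := by
        intro a z
        rw [Fin.prod_univ_succ]
        congr 1
        · simp
        · refine Finset.prod_congr rfl fun i _ => ?_
          rw [List.ofFn_succ]
          simp only [Fin.cons_zero, Fin.cons_succ, Fin.val_succ, List.take_succ_cons]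
          rw [List.append_cons]
      match m with
      | 0 =>
        have hstep : ∀ a : V,
            ∑ z : Fin n → V, (∏ s : Fin (n + 1), p s.val
              (x0 ++ (List.ofFn ((Fin.consEquiv fun _ => V) (a, z))).take s.val)
              (((Fin.consEquiv fun _ => V) (a, z)) s))
              * φ (x0 ++ (List.ofFn ((Fin.consEquiv fun _ => V) (a, z))).take 0)
                (((Fin.consEquiv fun _ => V) (a, z)) ⟨0, hm⟩)
            = p 0 x0 a * φ x0 a := by
          intro a
          have : ∀ z : Fin n → V, (∏ s : Fin (n + 1), p s.val
              (x0 ++ (List.ofFn ((Fin.consEquiv fun _ => V) (a, z))).take s.val)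
              (((Fin.consEquiv fun _ => V) (a, z)) s))
              * φ (x0 ++ (List.ofFn ((Fin.consEquiv fun _ => V) (a, z))).take 0)
                (((Fin.consEquiv fun _ => V) (a, z)) ⟨0, hm⟩)
              = (p 0 x0 a * φ x0 a) * ∏ s : Fin n, p (s.val + 1)
                ((x0 ++ [a]) ++ (List.ofFn z).take s.val) (z s) := by
            intro z
            have hc : ((Fin.consEquiv fun _ => V) (a, z) : Fin (n+1) → V) = Fin.cons a z := rfl
            rw [hc, hterm a z]
            have h0 : (Fin.cons a z : Fin (n+1) → V) ⟨0, hm⟩ = a := rfl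
            simp only [List.take_zero, List.append_nil, h0]
            ring
          rw [Finset.sum_congr rfl fun z _ => this z, ← Finset.mul_sum,
            chain_sum n (fun m x v => p (m + 1) x v) (fun m x => hp (m+1) x) (x0 ++ [a]),
            mul_one]
        rw [Finset.sum_congr rfl fun a _ => hstep a]
        exact hφ x0
      | m' + 1 =>
        have hm' : m' < n := Nat.lt_of_succ_lt_succ hm
        have hstep : ∀ a : V,
            ∑ z : Fin n → V, (∏ s : Fin (n + 1), p s.val
              (x0 ++ (List.ofFn ((Fin.consEquiv fun _ => V) (a, z))).take s.val)
              (((Fin.consEquiv fun _ => V) (a, z)) s))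
              * φ (x0 ++ (List.ofFn ((Fin.consEquiv fun _ => V) (a, z))).take (m' + 1))
                (((Fin.consEquiv fun _ => V) (a, z)) ⟨m' + 1, hm⟩)
            = p 0 x0 a * c := by
          intro a
          have hx : ∀ z : Fin n → V,
              x0 ++ (List.ofFn (Fin.cons a z : Fin (n+1) → V)).take (m' + 1)
                = (x0 ++ [a]) ++ (List.ofFn z).take m' := by
            intro z
            rw [List.ofFn_succ]
            simp only [Fin.cons_zero, Fin.cons_succ, List.take_succ_cons]
            rw [List.append_cons]
          have hy : ∀ z : Fin n → V,
              (Fin.cons a z : Fin (n+1) → V) ⟨m' + 1, hm⟩ = z ⟨m', hm'⟩ := by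
            intro z
            have : (⟨m' + 1, hm⟩ : Fin (n + 1)) = (⟨m', hm'⟩ : Fin n).succ := rfl
            rw [this, Fin.cons_succ]
          have : ∀ z : Fin n → V, (∏ s : Fin (n + 1), p s.val
              (x0 ++ (List.ofFn ((Fin.consEquiv fun _ => V) (a, z))).take s.val)
              (((Fin.consEquiv fun _ => V) (a, z)) s))
              * φ (x0 ++ (List.ofFn ((Fin.consEquiv fun _ => V) (a, z))).take (m' + 1))
                (((Fin.consEquiv fun _ => V) (a, z)) ⟨m' + 1, hm⟩)
              = p 0 x0 a * ((∏ s : Fin n, p (s.val + 1)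
                  ((x0 ++ [a]) ++ (List.ofFn z).take s.val) (z s))
                  * φ ((x0 ++ [a]) ++ (List.ofFn z).take m') (z ⟨m', hm'⟩)) := by
            intro z
            have hc : ((Fin.consEquiv fun _ => V) (a, z) : Fin (n+1) → V) = Fin.cons a z := rfl
            rw [hc, hterm a z, hx z]
            rw [hy z]
            ring
          rw [Finset.sum_congr rfl fun z _ => this z, ← Finset.mul_sum,
            ih (fun m x v => p (m + 1) x v) (fun m x => hp (m+1) x) m' hm'
              (fun x => hφ x) (x0 ++ [a])]
        rw [Finset.sum_congr rfl fun a _ => hstep a, ← Finset.sum_mul, hp 0 x0, one_mul]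

end PartF
section PartG

open RLVR

variable {V : Type*} [Fintype V] [DecidableEq V] [Nonempty V]
variable {P : Type*} [Fintype P]
variable {J S Bsz : ℕ}
variable {γ : ℝ} {σ : Fin J → List V → V} {h : Fin S → Fin J → EuclideanSpace ℝ P}
variable {D : List V → ℝ} {θ : EuclideanSpace ℝ P}

lemma dens_nonneg (hD0 : ∀ x, 0 ≤ D x) (ω : Traj V S) : 0 ≤ dens D γ σ h θ ω :=
  mul_nonneg (hD0 _) (Finset.prod_nonneg fun s _ => policy_nonneg _ _ _ _ _ _ _)

lemma dens_le (hD0 : ∀ x, 0 ≤ D x) (ω : Traj V S) : dens D γ σ h θ ω ≤ D ω.1 := by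
  have := Finset.prod_le_one (s := (Finset.univ : Finset (Fin S)))
    (f := fun s => policy γ σ h θ s (pref ω s.val) (ω.2 s))
    (fun s _ => policy_nonneg _ _ _ _ _ _ _) (fun s _ => policy_le_one _ _ _ _ _ _ _)
  calc dens D γ σ h θ ω ≤ D ω.1 * 1 := mul_le_mul_of_nonneg_left this (hD0 _)
    _ = D ω.1 := mul_one _

lemma summable_D (hD1 : ∑' x : List V, D x = 1) : Summable D := by
  by_contra hc
  rw [tsum_eq_zero_of_not_summable hc] at hD1
  exact zero_ne_one hD1

lemma summable_fst (hD0 : ∀ x, 0 ≤ D x) (hD1 : ∑' x : List V, D x = 1) :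
    Summable (fun ω : Traj V S => D ω.1) := by
  have h1 : Summable (fun _ : Fin S → V => (1 : ℝ)) := by
    apply summable_of_finite_support
    exact Set.Finite.subset (Set.finite_univ) (Set.subset_univ _)
  have h2 := (summable_D hD1).mul_of_nonneg h1 hD0 (fun x => zero_le_one)
  simpa using h2

lemma summable_dens (hD0 : ∀ x, 0 ≤ D x) (hD1 : ∑' x : List V, D x = 1) :
    Summable (dens D γ σ h θ (S := S)) :=
  Summable.of_nonneg_of_le (dens_nonneg hD0) (dens_le hD0) (summable_fst hD0 hD1)

lemma summable_ind (hD0 : ∀ x, 0 ≤ D x) (hD1 : ∑' x : List V, D x = 1)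
    (E : Set (Traj V S)) : Summable (Set.indicator E (dens D γ σ h θ)) :=
  Summable.of_nonneg_of_le (fun ω => Set.indicator_nonneg (fun a _ => dens_nonneg hD0 a) ω)
    (fun ω => Set.indicator_le_self' (fun a _ => dens_nonneg hD0 a) ω)
    (summable_dens hD0 hD1)

lemma Pr_nonneg (hD0 : ∀ x, 0 ≤ D x) (E : Set (Traj V S)) : 0 ≤ Pr D γ σ h θ E :=
  tsum_nonneg fun ω => Set.indicator_nonneg (fun a _ => dens_nonneg hD0 a) ω

lemma Pr_mono (hD0 : ∀ x, 0 ≤ D x) (hD1 : ∑' x : List V, D x = 1)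
    {E F : Set (Traj V S)} (hEF : E ⊆ F) : Pr D γ σ h θ E ≤ Pr D γ σ h θ F :=
  Summable.tsum_le_tsum
    (fun ω => Set.indicator_le_indicator_of_subset hEF (fun a => dens_nonneg hD0 a) ω)
    (summable_ind hD0 hD1 E) (summable_ind hD0 hD1 F)

lemma Pr_add_compl (hD0 : ∀ x, 0 ≤ D x) (hD1 : ∑' x : List V, D x = 1)
    (E : Set (Traj V S)) :
    Pr D γ σ h θ E + Pr D γ σ h θ Eᶜ = Pr D γ σ h θ Set.univ := by
  rw [Pr, Pr, Pr, ← Summable.tsum_add (summable_ind hD0 hD1 E) (summable_ind hD0 hD1 Eᶜ)]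
  refine tsum_congr fun ω => ?_
  rw [Set.indicator_univ]
  exact congrFun (Set.indicator_self_add_compl E (dens D γ σ h θ)) ω

lemma Pr_inter_add_inter_compl (hD0 : ∀ x, 0 ≤ D x) (hD1 : ∑' x : List V, D x = 1)
    (F E : Set (Traj V S)) :
    Pr D γ σ h θ (F ∩ E) + Pr D γ σ h θ (F ∩ Eᶜ) = Pr D γ σ h θ F := by
  rw [Pr, Pr, Pr, ← Summable.tsum_add (summable_ind hD0 hD1 _) (summable_ind hD0 hD1 _)]
  refine tsum_congr fun ω => ?_
  by_cases hF : ω ∈ F <;> by_cases hE : ω ∈ E <;>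
    simp [Set.indicator_apply, hF, hE]

end PartG
section PartH

open RLVR

variable {V : Type*} [Fintype V] [DecidableEq V] [Nonempty V]
variable {P : Type*} [Fintype P]
variable {J S Bsz : ℕ}
variable {γ : ℝ} {σ : Fin J → List V → V} {h : Fin S → Fin J → EuclideanSpace ℝ P}
variable {D : List V → ℝ} {θ : EuclideanSpace ℝ P}

/-- The step-distribution, reindexed by `ℕ` (junk beyond `S` via `mod`). -/
def pfun (hS : 0 < S) (γ : ℝ) (σ : Fin J → List V → V)
    (h : Fin S → Fin J → EuclideanSpace ℝ P) (θ : EuclideanSpace ℝ P) :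
    ℕ → List V → V → ℝ :=
  fun m x v => policy γ σ h θ ⟨m % S, Nat.mod_lt m hS⟩ x v

lemma pfun_eq (hS : 0 < S) (s : Fin S) (x : List V) (v : V) :
    pfun hS γ σ h θ s.val x v = policy γ σ h θ s x v := by
  have : (⟨s.val % S, Nat.mod_lt s.val hS⟩ : Fin S) = s := by
    apply Fin.ext
    exact Nat.mod_eq_of_lt s.isLt
  rw [pfun, this]

lemma pfun_sum (hS : 0 < S) (m : ℕ) (x : List V) : ∑ v, pfun hS γ σ h θ m x v = 1 :=
  policy_sum _ _ _ _ _ _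

lemma Pr_univ (hS : 0 < S) (hD0 : ∀ x, 0 ≤ D x) (hD1 : ∑' x : List V, D x = 1) :
    Pr D γ σ h θ (Set.univ : Set (Traj V S)) = 1 := by
  rw [Pr]
  simp only [Set.indicator_univ]
  rw [Summable.tsum_prod (summable_dens hD0 hD1)]
  have hx0 : ∀ x0 : List V, ∑' y : Fin S → V, dens D γ σ h θ (x0, y) = D x0 := by
    intro x0
    rw [tsum_fintype]
    have : ∀ y : Fin S → V, dens D γ σ h θ (x0, y)
        = D x0 * ∏ s : Fin S, pfun hS γ σ h θ s.val
            (x0 ++ (List.ofFn y).take s.val) (y s) := by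
      intro y
      rw [dens]
      congr 1
      exact Finset.prod_congr rfl fun s _ => by rw [pfun_eq hS]; rfl
    rw [Finset.sum_congr rfl fun y _ => this y, ← Finset.mul_sum,
      chain_sum S (pfun hS γ σ h θ) (pfun_sum hS) x0, mul_one]
  rw [tsum_congr hx0, hD1]

lemma Pr_Av (hS : 0 < S) (hJ : 0 < J)
    (hσ : ∀ j j' : Fin J, j ≠ j' → ∀ x : List V, σ j x ≠ σ j' x)
    (hD0 : ∀ x, 0 ≤ D x) (hD1 : ∑' x : List V, D x = 1) (s : Fin S) (j : Fin J) :
    Pr D γ σ h θ (Av σ s j) = kappa γ σ h θ s j := by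
  classical
  rw [Pr, Summable.tsum_prod (summable_ind hD0 hD1 _)]
  have hx0 : ∀ x0 : List V, ∑' y : Fin S → V,
      Set.indicator (Av σ s j) (dens D γ σ h θ) (x0, y) = D x0 * kappa γ σ h θ s j := by
    intro x0
    rw [tsum_fintype]
    have hpt : ∀ y : Fin S → V, Set.indicator (Av σ s j) (dens D γ σ h θ) (x0, y)
        = D x0 * ((∏ t : Fin S, pfun hS γ σ h θ t.val
            (x0 ++ (List.ofFn y).take t.val) (y t))
          * (if y ⟨s.val, s.isLt⟩ = σ j (x0 ++ (List.ofFn y).take s.val) then (1:ℝ) else 0)) := by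
      intro y
      rw [Set.indicator_apply]
      have hmem : ((x0, y) ∈ Av σ s j)
          ↔ y ⟨s.val, s.isLt⟩ = σ j (x0 ++ (List.ofFn y).take s.val) := by
        rw [Av, Set.mem_setOf_eq]
        constructor <;> intro hc <;> simpa [pref, Fin.eta] using hc
      by_cases hA : (x0, y) ∈ Av σ s j
      · rw [if_pos hA, if_pos (hmem.mp hA), dens, mul_one]
        congr 1
        exact Finset.prod_congr rfl fun t _ => by rw [pfun_eq hS]; rfl
      · rw [if_neg hA, if_neg (fun hc => hA (hmem.mpr hc)), mul_zero, mul_zero]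
    rw [Finset.sum_congr rfl fun y _ => hpt y, ← Finset.mul_sum]
    congr 1
    exact chain_sum_weighted S (pfun hS γ σ h θ) (pfun_sum hS)
      (fun x v => if v = σ j x then (1:ℝ) else 0) (kappa γ σ h θ s j) s.val s.isLt
      (fun x => by
        simp only [mul_ite, mul_one, mul_zero]
        rw [Finset.sum_ite_eq' Finset.univ (σ j x), if_pos (Finset.mem_univ _),
          pfun_eq hS, policy_sigma hσ]) x0
  rw [tsum_congr hx0, tsum_mul_right, hD1, one_mul]

end PartH
section PartI

variable {Ω : Type*} [Countable Ω]

lemma prod_tsum (B : ℕ) (g : Fin B → Ω → ℝ)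
    (h0 : ∀ b ω, 0 ≤ g b ω) (hs : ∀ b, Summable (g b)) :
    Summable (fun bs : Fin B → Ω => ∏ b, g b (bs b)) ∧
      ∑' bs : Fin B → Ω, ∏ b, g b (bs b) = ∏ b, ∑' ω, g b ω := by
  induction B with
  | zero =>
      have hsub : Subsingleton (Fin 0 → Ω) := ⟨fun a b => funext fun i => i.elim0⟩
      constructor
      · apply summable_of_finite_support
        exact Set.Finite.subset (Set.finite_singleton (fun i => i.elim0))
          (fun x _ => hsub.elim x _)
      · rw [tsum_eq_single (fun i => i.elim0) (fun b' hb' => absurd (hsub.elim b' _) hb')]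
        simp
  | succ n ih =>
      obtain ⟨ihS, ihT⟩ := ih (fun b => g b.succ) (fun b ω => h0 _ ω) (fun b => hs _)
      have hpt : ∀ (a : Ω) (z : Fin n → Ω),
          ∏ b : Fin (n + 1), g b ((Fin.cons a z : Fin (n+1) → Ω) b) = g 0 a * ∏ b : Fin n, g b.succ (z b) := by
        intro a z
        rw [Fin.prod_univ_succ]
        simp only [Fin.cons_zero, Fin.cons_succ]
      have hsum2 : Summable (fun p : Ω × (Fin n → Ω) =>
          g 0 p.1 * ∏ b : Fin n, g b.succ (p.2 b)) :=
        Summable.mul_of_nonneg (f := g 0)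
          (g := fun z : Fin n → Ω => ∏ b : Fin n, g b.succ (z b)) (hs 0) ihS
          (Pi.le_def.mpr fun ω => h0 0 ω)
          (Pi.le_def.mpr fun z => Finset.prod_nonneg fun b _ => h0 _ _)
      set e : Ω × (Fin n → Ω) ≃ (Fin (n + 1) → Ω) := Fin.consEquiv (fun _ => Ω) with he
      have hcomp : ∀ p : Ω × (Fin n → Ω),
          (∏ b : Fin (n+1), g b ((e p) b)) = g 0 p.1 * ∏ b : Fin n, g b.succ (p.2 b) := by
        intro ⟨a, z⟩
        have : (e (a, z) : Fin (n+1) → Ω) = Fin.cons a z := by rw [he]; rfl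
        rw [this, hpt]
      have hsummable : Summable (fun bs : Fin (n+1) → Ω => ∏ b, g b (bs b)) := by
        rw [← e.summable_iff]
        exact (summable_congr hcomp).mpr hsum2
      refine ⟨hsummable, ?_⟩
      rw [← e.tsum_eq (fun bs : Fin (n+1) → Ω => ∏ b, g b (bs b))]
      rw [tsum_congr hcomp, Summable.tsum_prod hsum2]
      simp_rw [tsum_mul_left]
      rw [tsum_mul_right, ihT, Fin.prod_univ_succ]

lemma batch_prod_summable (B : ℕ) (d : Ω → ℝ) (h0 : ∀ ω, 0 ≤ d ω) (hs : Summable d) :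
    Summable (fun bs : Fin B → Ω => ∏ b, d (bs b)) :=
  (prod_tsum B (fun _ => d) (fun _ => h0) (fun _ => hs)).1

lemma batch_one (B : ℕ) (d : Ω → ℝ) (h0 : ∀ ω, 0 ≤ d ω) (hs : Summable d)
    (h1 : ∑' ω, d ω = 1) :
    ∑' bs : Fin B → Ω, ∏ b, d (bs b) = 1 := by
  rw [(prod_tsum B (fun _ => d) (fun _ => h0) (fun _ => hs)).2]
  simp [h1]

lemma batch_single_aux (B : ℕ) (d χ : Ω → ℝ) (h0 : ∀ ω, 0 ≤ d ω) (hs : Summable d)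
    (h1 : ∑' ω, d ω = 1) (hχ0 : ∀ ω, 0 ≤ χ ω) (hχ1 : ∀ ω, χ ω ≤ 1) (b0 : Fin B) :
    Summable (fun bs : Fin B → Ω => (∏ b, d (bs b)) * χ (bs b0)) ∧
      ∑' bs : Fin B → Ω, (∏ b, d (bs b)) * χ (bs b0) = ∑' ω, d ω * χ ω := by
  classical
  set g : Fin B → Ω → ℝ := Function.update (fun _ : Fin B => d) b0 (fun ω => d ω * χ ω)
    with hg
  have hdχ : Summable (fun ω => d ω * χ ω) :=
    Summable.of_nonneg_of_le (fun ω => mul_nonneg (h0 ω) (hχ0 ω))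
      (fun ω => mul_le_of_le_one_right (h0 ω) (hχ1 ω)) hs
  have hg0 : ∀ b ω, 0 ≤ g b ω := by
    intro b ω
    by_cases hb : b = b0
    · subst hb; rw [hg, Function.update_self]; exact mul_nonneg (h0 ω) (hχ0 ω)
    · rw [hg, Function.update_of_ne hb]; exact h0 ω
  have hgs : ∀ b, Summable (g b) := by
    intro b
    by_cases hb : b = b0
    · subst hb; rw [hg, Function.update_self]; exact hdχ
    · rw [hg, Function.update_of_ne hb]; exact hs
  have hpt : ∀ bs : Fin B → Ω, (∏ b, g b (bs b)) = (∏ b, d (bs b)) * χ (bs b0) := by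
    intro bs
    rw [← Finset.mul_prod_erase Finset.univ (fun b => g b (bs b)) (Finset.mem_univ b0),
      ← Finset.mul_prod_erase Finset.univ (fun b => d (bs b)) (Finset.mem_univ b0)]
    have hrest : ∏ b ∈ Finset.univ.erase b0, g b (bs b)
        = ∏ b ∈ Finset.univ.erase b0, d (bs b) := by
      refine Finset.prod_congr rfl fun b hb => ?_
      rw [hg, Function.update_of_ne (Finset.ne_of_mem_erase hb)]
    rw [hrest, hg, Function.update_self]
    ring
  obtain ⟨hS, hT⟩ := prod_tsum B g hg0 hgs
  constructor
  · exact (summable_congr hpt).mp hS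
  · rw [← tsum_congr hpt, hT,
      ← Finset.mul_prod_erase Finset.univ (fun b => ∑' ω, g b ω) (Finset.mem_univ b0)]
    have hrest : ∏ b ∈ Finset.univ.erase b0, ∑' ω, g b ω = 1 := by
      refine Finset.prod_eq_one fun b hb => ?_
      rw [hg, Function.update_of_ne (Finset.ne_of_mem_erase hb)]
      exact h1
    rw [hrest, hg, Function.update_self, mul_one]

lemma batch_expectation (B : ℕ) (hB : 0 < B) (d χ : Ω → ℝ) (h0 : ∀ ω, 0 ≤ d ω)
    (hs : Summable d) (h1 : ∑' ω, d ω = 1) (hχ0 : ∀ ω, 0 ≤ χ ω) (hχ1 : ∀ ω, χ ω ≤ 1)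
    (κ : ℝ) :
    ∑' bs : Fin B → Ω, (∏ b, d (bs b)) * (∑ b, (χ (bs b) - κ))
      = B * ((∑' ω, d ω * χ ω) - κ) := by
  have hpt : ∀ bs : Fin B → Ω, (∏ b, d (bs b)) * (∑ b, (χ (bs b) - κ))
      = (∑ b, (∏ b', d (bs b')) * χ (bs b)) - (B * κ) * ∏ b, d (bs b) := by
    intro bs
    rw [Finset.sum_sub_distrib, Finset.sum_const, ← Finset.mul_sum]
    simp only [Finset.card_univ, Fintype.card_fin, nsmul_eq_mul]
    ring
  rw [tsum_congr hpt]
  have hsum1 : Summable (fun bs : Fin B → Ω => ∑ b, (∏ b', d (bs b')) * χ (bs b)) :=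
    summable_sum fun b _ => (batch_single_aux B d χ h0 hs h1 hχ0 hχ1 b).1
  have hsum2 : Summable (fun bs : Fin B → Ω => (B * κ) * ∏ b, d (bs b)) :=
    (batch_prod_summable B d h0 hs).mul_left _
  rw [Summable.tsum_sub hsum1 hsum2, Summable.tsum_finsetSum fun b _ => (batch_single_aux B d χ h0 hs h1 hχ0 hχ1 b).1,
    tsum_mul_left, batch_one B d h0 hs h1]
  have : ∀ b : Fin B, ∑' bs : Fin B → Ω, (∏ b', d (bs b')) * χ (bs b) = ∑' ω, d ω * χ ω :=
    fun b => (batch_single_aux B d χ h0 hs h1 hχ0 hχ1 b).2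
  rw [Finset.sum_congr rfl fun b _ => this b, Finset.sum_const]
  simp only [Finset.card_univ, Fintype.card_fin, nsmul_eq_mul, mul_one]
  ring

end PartI
section PartJ

open RLVR

variable {V : Type*} [Fintype V] [DecidableEq V] [Nonempty V]
variable {P : Type*} [Fintype P]
variable {J S Bsz : ℕ}
variable {γ : ℝ} {σ : Fin J → List V → V} {h : Fin S → Fin J → EuclideanSpace ℝ P}
variable {D : List V → ℝ} {θ : EuclideanSpace ℝ P} {Verif : List V → Bool}

lemma condDens_nonneg (hD0 : ∀ x, 0 ≤ D x) (hposle : 0 ≤ Pr D γ σ h θ (VE Verif))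
    (ω : Traj V S) : 0 ≤ condDens D γ σ h Verif θ ω :=
  div_nonneg (Set.indicator_nonneg (fun a _ => dens_nonneg hD0 a) ω) hposle

lemma summable_condDens (hD0 : ∀ x, 0 ≤ D x) (hD1 : ∑' x : List V, D x = 1) :
    Summable (condDens D γ σ h Verif θ (S := S)) := by
  show Summable (fun ω : Traj V S =>
    Set.indicator (VE Verif) (dens D γ σ h θ) ω / Pr D γ σ h θ (VE Verif))
  exact (summable_ind hD0 hD1 (VE Verif)).div_const _

lemma tsum_condDens (hD0 : ∀ x, 0 ≤ D x) (hD1 : ∑' x : List V, D x = 1)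
    (hpos : 0 < Pr D γ σ h θ (VE Verif)) :
    ∑' ω : Traj V S, condDens D γ σ h Verif θ ω = 1 := by
  show (∑' ω : Traj V S,
    Set.indicator (VE Verif) (dens D γ σ h θ) ω / Pr D γ σ h θ (VE Verif)) = 1
  rw [tsum_div_const]
  exact div_self hpos.ne'

lemma tsum_condDens_ind (hD0 : ∀ x, 0 ≤ D x) (hD1 : ∑' x : List V, D x = 1)
    (s : Fin S) (j : Fin J) :
    ∑' ω : Traj V S, condDens D γ σ h Verif θ ω
        * (if ω.2 s = σ j (pref ω s.val) then (1:ℝ) else 0)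
      = Pr D γ σ h θ (VE Verif ∩ Av σ s j) / Pr D γ σ h θ (VE Verif) := by
  classical
  have hpt : ∀ ω : Traj V S, condDens D γ σ h Verif θ ω
      * (if ω.2 s = σ j (pref ω s.val) then (1:ℝ) else 0)
      = Set.indicator (VE Verif ∩ Av σ s j) (dens D γ σ h θ) ω
          / Pr D γ σ h θ (VE Verif) := by
    intro ω
    have hmem : ω ∈ Av σ s j ↔ ω.2 s = σ j (pref ω s.val) := Iff.rfl
    rw [condDens, Set.indicator_apply, Set.indicator_apply]
    simp only [Set.mem_inter_iff]
    by_cases h1 : ω ∈ VE Verif <;> by_cases h2 : ω ∈ Av σ s j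
    · rw [if_pos h1, if_pos (hmem.mp h2), mul_one,
        if_pos (show ω ∈ VE Verif ∧ ω ∈ Av σ s j from ⟨h1, h2⟩)]
    · rw [if_pos h1, if_neg (fun hc => h2 (hmem.mpr hc)), mul_zero,
        if_neg (show ¬(ω ∈ VE Verif ∧ ω ∈ Av σ s j) from fun hc => h2 hc.2), zero_div]
    · rw [if_neg h1, zero_div, zero_mul,
        if_neg (show ¬(ω ∈ VE Verif ∧ ω ∈ Av σ s j) from fun hc => h1 hc.1), zero_div]
    · rw [if_neg h1, zero_div, zero_mul,
        if_neg (show ¬(ω ∈ VE Verif ∧ ω ∈ Av σ s j) from fun hc => h1 hc.1), zero_div]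
  rw [tsum_congr hpt, tsum_div_const]
  rfl

end PartJ

end RLVR

open RLVR in
/-- Theorem 5.2 of the paper. Under Assumptions 1 and 2, for any CoT
step `s`, parameters `θt` at iteration `t`, task `j`, and any fixed string `xprev`
consisting of a prompt plus `s − 1` CoT tokens: if `ρ^{(t)}_{s,j} > 0`, the expected
logit update at token `σ_j(xprev)` over the training batch equals
`η·γ²·P_t(A_{s,j}|V=1)·(1 − P_t(A_{s,j}))·(1 − 1/ρ^{(t)}_{s,j})`,
and if `ρ^{(t)}_{s,j} = 0` it equals `−η·γ²·P_t(A_{s,j})`. -/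
theorem stmt0 {V : Type*} [Fintype V] [DecidableEq V] [Nonempty V]
    {P : Type*} [Fintype P] {J S Bsz : ℕ}
    (hS : 0 < S) (hJ : 0 < J) (hBsz : 0 < Bsz)
    (γ η : ℝ) (hγ : 0 < γ) (hη : 0 < η)
    (σ : Fin J → List V → V)
    (hσ : ∀ j j' : Fin J, j ≠ j' → ∀ x : List V, σ j x ≠ σ j' x)
    (h : Fin S → Fin J → EuclideanSpace ℝ P)
    (hh : Orthonormal ℝ fun sj : Fin S × Fin J => h sj.1 sj.2)
    (D : List V → ℝ) (hD0 : ∀ x, 0 ≤ D x) (hD1 : ∑' x : List V, D x = 1)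
    (Verif : List V → Bool) (τ : Fin S → Fin J)
    (hA1 : ∀ x0 : List V, 0 < D x0 → Verif (fstar σ τ x0) = true)
    (θt : EuclideanSpace ℝ P)
    (hpos : 0 < Pr D γ σ h θt (VE Verif))
    (s : Fin S) (j : Fin J) (xprev : List V) :
    (0 < ratio D γ σ h Verif θt s j →
      Ebatch (Bsz := Bsz) D γ σ h Verif θt
        (fun bs => model γ σ h (update γ σ h η θt bs) s xprev (σ j xprev)
            - model γ σ h θt s xprev (σ j xprev))
        = η * γ ^ 2 * condPr D γ σ h θt (Av σ s j) (VE Verif)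
            * (1 - Pr D γ σ h θt (Av σ s j))
            * (1 - ((ratio D γ σ h Verif θt s j)⁻¹).toReal))
    ∧ (ratio D γ σ h Verif θt s j = 0 →
      Ebatch (Bsz := Bsz) D γ σ h Verif θt
        (fun bs => model γ σ h (update γ σ h η θt bs) s xprev (σ j xprev)
            - model γ σ h θt s xprev (σ j xprev))
        = -(η * γ ^ 2 * Pr D γ σ h θt (Av σ s j))) := by
  classical
  have hκpos : 0 < kappa γ σ h θt s j := kappa_pos hJ hσ θt s j
  have hpA : Pr D γ σ h θt (Av σ s j) = kappa γ σ h θt s j := Pr_Av hS hJ hσ hD0 hD1 s j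
  have hpApos : 0 < Pr D γ σ h θt (Av σ s j) := hpA ▸ hκpos
  have hχ0 : ∀ ω : Traj V S,
      (0:ℝ) ≤ (if ω.2 s = σ j (pref ω s.val) then (1:ℝ) else 0) := by
    intro ω; split <;> norm_num
  have hχ1 : ∀ ω : Traj V S,
      (if ω.2 s = σ j (pref ω s.val) then (1:ℝ) else 0) ≤ 1 := by
    intro ω; split <;> norm_num
  -- the key expectation identity
  have hkey : Ebatch (Bsz := Bsz) D γ σ h Verif θt
      (fun bs => model γ σ h (update γ σ h η θt bs) s xprev (σ j xprev)
          - model γ σ h θt s xprev (σ j xprev))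
      = η * γ ^ 2 * (Pr D γ σ h θt (VE Verif ∩ Av σ s j) / Pr D γ σ h θt (VE Verif)
          - Pr D γ σ h θt (Av σ s j)) := by
    rw [Ebatch]
    have hFn : ∀ bs : Fin Bsz → Traj V S,
        (∏ b, condDens D γ σ h Verif θt (bs b)) *
          (model γ σ h (update γ σ h η θt bs) s xprev (σ j xprev)
            - model γ σ h θt s xprev (σ j xprev))
        = (η * γ ^ 2 / Bsz) * ((∏ b, condDens D γ σ h Verif θt (bs b)) *
            (∑ b, ((if (bs b).2 s = σ j (pref (bs b) s.val) then (1:ℝ) else 0)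
              - kappa γ σ h θt s j))) := by
      intro bs
      rw [modelDiff hσ hh, Q]
      have hterm : ∀ b : Fin Bsz,
          (if (bs b).2 s = σ j (pref (bs b) s.val) then (1:ℝ) else 0)
            - policy γ σ h θt s (pref (bs b) s.val) (σ j (pref (bs b) s.val))
          = (if (bs b).2 s = σ j (pref (bs b) s.val) then (1:ℝ) else 0)
            - kappa γ σ h θt s j := by
        intro b; rw [policy_sigma hσ]
      rw [Finset.sum_congr rfl fun b _ => hterm b]
      ring
    rw [tsum_congr hFn, tsum_mul_left,
      batch_expectation Bsz hBsz (condDens D γ σ h Verif θt)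
        (fun ω => if ω.2 s = σ j (pref ω s.val) then (1:ℝ) else 0)
        (condDens_nonneg hD0 (Pr_nonneg hD0 _)) (summable_condDens hD0 hD1)
        (tsum_condDens hD0 hD1 hpos) hχ0 hχ1 (kappa γ σ h θt s j),
      tsum_condDens_ind hD0 hD1 s j, ← hpA]
    have hB : (Bsz : ℝ) ≠ 0 := Nat.cast_ne_zero.mpr hBsz.ne'
    field_simp
  -- probability bookkeeping
  have hAcompl : Pr D γ σ h θt ((Av σ s j)ᶜ) = 1 - Pr D γ σ h θt (Av σ s j) := by
    have h1 := Pr_add_compl (θ := θt) (γ := γ) (σ := σ) (h := h) hD0 hD1 (Av σ s j)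
    rw [Pr_univ hS hD0 hD1] at h1
    linarith
  have hsplit : Pr D γ σ h θt (VE Verif ∩ Av σ s j)
      + Pr D γ σ h θt (VE Verif ∩ (Av σ s j)ᶜ) = Pr D γ σ h θt (VE Verif) :=
    Pr_inter_add_inter_compl hD0 hD1 _ _
  have hpA_le : Pr D γ σ h θt (Av σ s j) ≤ 1 := by
    have := Pr_mono (θ := θt) (γ := γ) (σ := σ) (h := h) hD0 hD1
      (Set.subset_univ (Av σ s j))
    rwa [Pr_univ hS hD0 hD1] at this
  have hpVA0 : 0 ≤ Pr D γ σ h θt (VE Verif ∩ Av σ s j) := Pr_nonneg hD0 _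
  have hpVAc0 : 0 ≤ Pr D γ σ h θt (VE Verif ∩ (Av σ s j)ᶜ) := Pr_nonneg hD0 _
  have hcondVA : condPr D γ σ h θt (VE Verif) (Av σ s j)
      = Pr D γ σ h θt (VE Verif ∩ Av σ s j) / Pr D γ σ h θt (Av σ s j) := rfl
  have hcondVAc : condPr D γ σ h θt (VE Verif) ((Av σ s j)ᶜ)
      = Pr D γ σ h θt (VE Verif ∩ (Av σ s j)ᶜ) / Pr D γ σ h θt ((Av σ s j)ᶜ) := rfl
  have hcondAV : condPr D γ σ h θt (Av σ s j) (VE Verif)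
      = Pr D γ σ h θt (VE Verif ∩ Av σ s j) / Pr D γ σ h θt (VE Verif) := by
    rw [condPr, Set.inter_comm]
  constructor
  · -- positive-ratio case
    intro hratio
    rw [ratio] at hratio
    obtain ⟨hnum, -⟩ := ENNReal.div_pos_iff.mp hratio
    have hcond_pos : 0 < condPr D γ σ h θt (VE Verif) (Av σ s j) :=
      not_le.mp (fun hc => hnum (ENNReal.ofReal_eq_zero.mpr hc))
    have hpVA_pos : 0 < Pr D γ σ h θt (VE Verif ∩ Av σ s j) := by
      rw [hcondVA] at hcond_pos
      rcases div_pos_iff.mp hcond_pos with ⟨ha, _⟩ | ⟨_, hb⟩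
      · exact ha
      · exact absurd hpApos (not_lt.mpr hb.le)
    have hqnn : 0 ≤ condPr D γ σ h θt (VE Verif) ((Av σ s j)ᶜ) := by
      rw [hcondVAc]
      exact div_nonneg hpVAc0 (Pr_nonneg hD0 _)
    have hinv : ((ratio D γ σ h Verif θt s j)⁻¹).toReal
        = condPr D γ σ h θt (VE Verif) ((Av σ s j)ᶜ)
          / condPr D γ σ h θt (VE Verif) (Av σ s j) := by
      rw [ratio, ENNReal.inv_div (Or.inl ENNReal.ofReal_ne_top) (Or.inr hnum),
        ENNReal.toReal_div, ENNReal.toReal_ofReal hqnn, ENNReal.toReal_ofReal hcond_pos.le]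
    rw [hkey, hinv, hcondAV, hcondVAc, hcondVA, hAcompl]
    rcases eq_or_lt_of_le hpA_le with hpA1 | hpAlt
    · -- degenerate case P(A) = 1
      have hpAc0 : (1 : ℝ) - Pr D γ σ h θt (Av σ s j) = 0 := by rw [hpA1, sub_self]
      have hble : Pr D γ σ h θt (VE Verif ∩ (Av σ s j)ᶜ)
          ≤ Pr D γ σ h θt ((Av σ s j)ᶜ) :=
        Pr_mono hD0 hD1 Set.inter_subset_right
      rw [hAcompl, hpAc0] at hble
      have hb0 : Pr D γ σ h θt (VE Verif ∩ (Av σ s j)ᶜ) = 0 := le_antisymm hble hpVAc0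
      have hva : Pr D γ σ h θt (VE Verif ∩ Av σ s j) = Pr D γ σ h θt (VE Verif) := by
        rw [← hsplit, hb0, add_zero]
      rw [hpAc0, hva, div_self hpos.ne', ← hpA1]
      ring
    · -- generic case P(A) < 1
      have hb : Pr D γ σ h θt (VE Verif ∩ (Av σ s j)ᶜ)
          = Pr D γ σ h θt (VE Verif) - Pr D γ σ h θt (VE Verif ∩ Av σ s j) := by
        linarith
      rw [hb]
      have h1A : (1 : ℝ) - Pr D γ σ h θt (Av σ s j) ≠ 0 := by linarith
      field_simp
      ring
  · -- zero-ratio case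
    intro hrz
    rw [ratio, ENNReal.div_eq_zero_iff] at hrz
    rcases hrz with h0 | htop
    · have hle : condPr D γ σ h θt (VE Verif) (Av σ s j) ≤ 0 :=
        ENNReal.ofReal_eq_zero.mp h0
      rw [hcondVA] at hle
      have ha0 : Pr D γ σ h θt (VE Verif ∩ Av σ s j) = 0 := by
        have hge : 0 ≤ Pr D γ σ h θt (VE Verif ∩ Av σ s j) / Pr D γ σ h θt (Av σ s j) :=
          div_nonneg hpVA0 hpApos.le
        have : Pr D γ σ h θt (VE Verif ∩ Av σ s j) / Pr D γ σ h θt (Av σ s j) = 0 :=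
          le_antisymm hle hge
        rcases div_eq_zero_iff.mp this with ha | hb
        · exact ha
        · exact absurd hb hpApos.ne'
      rw [hkey, ha0, zero_div]
      ring
    · exact absurd htop ENNReal.ofReal_ne_top
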